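/- Let ρ be a probability measure on ℝ. Then inf_{(u,v) ∈ ℝ²} ln ∫_ℝ e^{uz + vz²} dρ(z) = ln ρ({0}), and consequently the Cramér transform I of the law of (Z, Z²) for Z ~ ρ satisfies I(0,0) = −ln ρ({0}) (with the convention ln 0 = −∞). -/

import Mathlib

open MeasureTheory ENNReal Filter

/-- The log-Laplace transform of the law of `(Z, Z^2)` for `Z ~ ρ`, as a function into `ℝ≥0∞`
before taking logarithms. -/
noncomputable def lapCW (ρ : Measure ℝ) (u v : ℝ) : ℝ≥0∞ :=
  ∫⁻ z, ENNReal.ofReal (Real.exp (u * z + v * z ^ 2)) ∂ρ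

/-- The Cramér transform `I` of the law of `(Z, Z^2)` for `Z ~ ρ`, with values in `EReal`. -/
noncomputable def cramCW (ρ : Measure ℝ) (x y : ℝ) : EReal :=
  ⨆ p : ℝ × ℝ, (((x * p.1 + y * p.2 : ℝ) : EReal) - ENNReal.log (lapCW ρ p.1 p.2))

lemma EReal.iSup_neg_aux {ι : Sort*} (f : ι → EReal) : (⨆ i, -f i) = -⨅ i, f i := by
  apply le_antisymm
  · exact iSup_le fun i => EReal.neg_le_neg_iff.mpr (iInf_le f i)
  · rw [EReal.neg_le]
    exact le_iInf fun i => EReal.neg_le.mp (le_iSup (fun i => -f i) i)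

lemma lapCW_ge (ρ : Measure ℝ) (u v : ℝ) : ρ {0} ≤ lapCW ρ u v := by
  calc ρ {0} = ∫⁻ z in {0}, ENNReal.ofReal (Real.exp (u * z + v * z ^ 2)) ∂ρ := by
        rw [lintegral_singleton]; simp
    _ ≤ lapCW ρ u v := setLIntegral_le_lintegral _ _

lemma iInf_lapCW (ρ : Measure ℝ) [IsProbabilityMeasure ρ] :
    (⨅ p : ℝ × ℝ, lapCW ρ p.1 p.2) = ρ {0} := by
  refine le_antisymm ?_ (le_iInf fun p => lapCW_ge ρ p.1 p.2)
  set f : ℕ → ℝ → ℝ≥0∞ := fun n z => ENNReal.ofReal (Real.exp (-(n : ℝ) * z ^ 2)) with hf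
  have hmeas : ∀ n, Measurable (f n) := fun n => by
    exact (Real.continuous_exp.comp (by continuity)).measurable.ennreal_ofReal
  have hanti : Antitone f := by
    intro m n hmn z
    apply ENNReal.ofReal_le_ofReal
    apply Real.exp_le_exp.mpr
    have : (m : ℝ) * z ^ 2 ≤ (n : ℝ) * z ^ 2 :=
      mul_le_mul_of_nonneg_right (Nat.cast_le.mpr hmn) (sq_nonneg z)
    linarith
  have hfin : ∫⁻ z, f 0 z ∂ρ ≠ ⊤ := by
    simp [hf, lintegral_one]
  have hpt : ∀ z, (⨅ n, f n z) = Set.indicator ({0} : Set ℝ) 1 z := by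
    intro z
    by_cases hz : z = 0
    · simp [hz, hf]
    · have hz2 : 0 < z ^ 2 := by positivity
      have htend : Tendsto (fun n : ℕ => f n z) atTop (nhds 0) := by
        have h1 : Tendsto (fun n : ℕ => -(n : ℝ) * z ^ 2) atTop atBot := by
          apply Tendsto.atBot_mul_const hz2
          exact tendsto_neg_atBot_iff.mpr tendsto_natCast_atTop_atTop
        have h2 : Tendsto (fun n : ℕ => Real.exp (-(n : ℝ) * z ^ 2)) atTop (nhds 0) :=
          Real.tendsto_exp_atBot.comp h1
        have := (ENNReal.continuous_ofReal.tendsto 0).comp h2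
        simpa [hf, Function.comp_def, neg_mul] using this
      have h3 : Tendsto (fun n : ℕ => f n z) atTop (nhds (⨅ n, f n z)) :=
        tendsto_atTop_iInf (fun m n hmn => hanti hmn z)
      have := tendsto_nhds_unique h3 htend
      rw [this]
      simp [Set.indicator, hz]
  calc (⨅ p : ℝ × ℝ, lapCW ρ p.1 p.2) ≤ ⨅ n : ℕ, lapCW ρ 0 (-(n : ℝ)) :=
        le_iInf fun n => iInf_le _ ((0 : ℝ), (-(n : ℝ)))
    _ = ⨅ n : ℕ, ∫⁻ z, f n z ∂ρ := by
        refine iInf_congr fun n => ?_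
        simp [lapCW, hf]
    _ = ∫⁻ z, ⨅ n, f n z ∂ρ := (lintegral_iInf hmeas hanti hfin).symm
    _ = ∫⁻ z, Set.indicator ({0} : Set ℝ) 1 z ∂ρ := by
        exact lintegral_congr hpt
    _ = ρ {0} := by
        rw [lintegral_indicator (measurableSet_singleton 0)]
        simp

theorem iInf_logLaplace_eq_log_mass_at_zero (ρ : Measure ℝ) [IsProbabilityMeasure ρ] :
    (⨅ p : ℝ × ℝ, ENNReal.log (lapCW ρ p.1 p.2)) = ENNReal.log (ρ {0}) ∧
    cramCW ρ 0 0 = -ENNReal.log (ρ {0}) := by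
  have hlog : (⨅ p : ℝ × ℝ, ENNReal.log (lapCW ρ p.1 p.2)) = ENNReal.log (ρ {0}) := by
    rw [← iInf_lapCW ρ]
    exact (OrderIso.map_iInf ENNReal.logOrderIso _).symm
  refine ⟨hlog, ?_⟩
  have : cramCW ρ 0 0 = ⨆ p : ℝ × ℝ, -ENNReal.log (lapCW ρ p.1 p.2) := by
    unfold cramCW
    refine iSup_congr fun p => ?_
    norm_num
  rw [this, EReal.iSup_neg_aux, hlog]
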